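/- Consider g(n, p, 0) = −1 + n·(1 − n·p)/ln((1 − (n−1)p)/p), defined for p ∈ (0, 1/(n−1)) with p ≠ 1/n. For n = 2, g(2, p, 0) < 0 for all p ∈ (0, 1/2) ∪ (1/2, 1). For each integer n ≥ 3 there exists κ ∈ (e^{−n}, 1/(n(n−1))) such that g(n, p, 0) > 0 for p ∈ (κ, 1/n), g(n, κ, 0) = 0, and g(n, p, 0) < 0 for p ∈ (0, κ) ∪ (1/n, 1/(n−1)). -/

import Mathlib

open Real

/-- `g(n, p, 0) = −1 + n·(1 − n·p)/ln((1 − (n−1)p)/p)`. -/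
noncomputable def g0 (n : ℕ) (p : ℝ) : ℝ :=
  -1 + (n : ℝ) * (1 - (n : ℝ) * p) / Real.log ((1 - ((n : ℝ) - 1) * p) / p)

noncomputable def Hf (N p : ℝ) : ℝ :=
  N * (1 - N * p) - Real.log (1 - (N - 1) * p) + Real.log p

lemma hasDerivAt_Hf (N p : ℝ) (hp : 0 < p) (hq : 0 < 1 - (N - 1) * p) :
    HasDerivAt (Hf N) (-N ^ 2 + (N - 1) / (1 - (N - 1) * p) + 1 / p) p := by
  have h1 : HasDerivAt (fun x : ℝ => N * (1 - N * x)) (N * (-N)) p := by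
    simpa using (((hasDerivAt_id p).const_mul N).const_sub 1).const_mul N
  have h3 : HasDerivAt (fun x : ℝ => 1 - (N - 1) * x) (-(N - 1)) p := by
    simpa using ((hasDerivAt_id p).const_mul (N - 1)).const_sub 1
  have h4 : HasDerivAt (fun x : ℝ => Real.log (1 - (N - 1) * x))
      ((1 - (N - 1) * p)⁻¹ * (-(N - 1))) p := by
    have h := (Real.hasDerivAt_log hq.ne').comp p h3; exact h
  have h5 : HasDerivAt Real.log p⁻¹ p := Real.hasDerivAt_log hp.ne'
  have h6 := (h1.sub h4).add h5
  have heq : N * -N - (1 - (N - 1) * p)⁻¹ * -(N - 1) + p⁻¹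
      = -N ^ 2 + (N - 1) / (1 - (N - 1) * p) + 1 / p := by
    field_simp
    ring
  rw [heq] at h6
  exact h6

lemma deriv_Hf_key (N p : ℝ) (hp : p ≠ 0) (hq : 1 - (N - 1) * p ≠ 0) :
    (-N ^ 2 + (N - 1) / (1 - (N - 1) * p) + 1 / p) * (p * (1 - (N - 1) * p))
      = (N * (N - 1) * p - 1) * (N * p - 1) := by
  field_simp
  ring

lemma Hf_strictMonoOn (N : ℝ) (s : Set ℝ)
    (hs : Convex ℝ s)
    (hsub : ∀ x ∈ s, 0 < x ∧ 0 < 1 - (N - 1) * x)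
    (hpos : ∀ x ∈ interior s, 0 < (N * (N - 1) * x - 1) * (N * x - 1)) :
    StrictMonoOn (Hf N) s := by
  apply strictMonoOn_of_deriv_pos hs
  · intro x hx
    obtain ⟨h1, h2⟩ := hsub x hx
    exact (hasDerivAt_Hf N x h1 h2).continuousAt.continuousWithinAt
  · intro x hx
    obtain ⟨h1, h2⟩ := hsub x (interior_subset hx)
    rw [(hasDerivAt_Hf N x h1 h2).deriv]
    have hP : 0 < x * (1 - (N - 1) * x) := mul_pos h1 h2
    have hkey := deriv_Hf_key N x h1.ne' h2.ne'
    nlinarith [hpos x hx]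

lemma Hf_strictAntiOn (N : ℝ) (s : Set ℝ)
    (hs : Convex ℝ s)
    (hsub : ∀ x ∈ s, 0 < x ∧ 0 < 1 - (N - 1) * x)
    (hneg : ∀ x ∈ interior s, (N * (N - 1) * x - 1) * (N * x - 1) < 0) :
    StrictAntiOn (Hf N) s := by
  apply strictAntiOn_of_deriv_neg hs
  · intro x hx
    obtain ⟨h1, h2⟩ := hsub x hx
    exact (hasDerivAt_Hf N x h1 h2).continuousAt.continuousWithinAt
  · intro x hx
    obtain ⟨h1, h2⟩ := hsub x (interior_subset hx)
    rw [(hasDerivAt_Hf N x h1 h2).deriv]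
    have hP : 0 < x * (1 - (N - 1) * x) := mul_pos h1 h2
    have hkey := deriv_Hf_key N x h1.ne' h2.ne'
    nlinarith [hneg x hx]

lemma g0_eq_div (n : ℕ) (p : ℝ) (hp : 0 < p) (hq : 0 < 1 - ((n : ℝ) - 1) * p)
    (hL : Real.log (1 - ((n : ℝ) - 1) * p) - Real.log p ≠ 0) :
    g0 n p = Hf (n : ℝ) p / (Real.log (1 - ((n : ℝ) - 1) * p) - Real.log p) := by
  rw [g0, Hf, Real.log_div hq.ne' hp.ne']
  rw [eq_div_iff hL, add_mul, div_mul_cancel₀ _ hL]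
  ring

lemma L_pos (N p : ℝ) (hp : 0 < p) (hNp : N * p < 1) :
    0 < Real.log (1 - (N - 1) * p) - Real.log p := by
  have : Real.log p < Real.log (1 - (N - 1) * p) :=
    Real.log_lt_log hp (by nlinarith)
  linarith

lemma L_neg (N p : ℝ) (hp : 0 < p) (hq : 0 < 1 - (N - 1) * p) (hNp : 1 < N * p) :
    Real.log (1 - (N - 1) * p) - Real.log p < 0 := by
  have : Real.log (1 - (N - 1) * p) < Real.log p :=
    Real.log_lt_log hq (by nlinarith)
  linarith

lemma Hf_at_inv (N : ℝ) (hN : 0 < N) : Hf N (1 / N) = 0 := by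
  have h1 : 1 - (N - 1) * (1 / N) = 1 / N := by field_simp; ring
  rw [Hf, h1]
  field_simp
  ring

set_option maxHeartbeats 1600000 in
theorem stmt16 :
    (∀ p : ℝ, p ∈ Set.Ioo (0 : ℝ) (1 / 2) ∪ Set.Ioo (1 / 2 : ℝ) 1 → g0 2 p < 0) ∧
    (∀ n : ℕ, 3 ≤ n →
      ∃ κ ∈ Set.Ioo (Real.exp (-(n : ℝ))) (1 / ((n : ℝ) * ((n : ℝ) - 1))),
        (∀ p ∈ Set.Ioo κ (1 / (n : ℝ)), 0 < g0 n p) ∧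
        g0 n κ = 0 ∧
        (∀ p : ℝ, p ∈ Set.Ioo (0 : ℝ) κ ∪ Set.Ioo (1 / (n : ℝ)) (1 / ((n : ℝ) - 1)) →
          g0 n p < 0)) := by
  constructor
  · -- n = 2 case
    have hcast : ((2 : ℕ) : ℝ) = 2 := by norm_num
    have hval : Hf 2 (1 / 2) = 0 := by simpa using Hf_at_inv 2 (by norm_num)
    have mono1 : StrictMonoOn (Hf 2) (Set.Ioc 0 (1 / 2)) := by
      apply Hf_strictMonoOn 2 _ (convex_Ioc _ _)
      · rintro x ⟨hx1, hx2⟩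
        constructor <;> [exact hx1; nlinarith]
      · rw [interior_Ioc]
        rintro x ⟨hx1, hx2⟩
        nlinarith
    have mono2 : StrictMonoOn (Hf 2) (Set.Ico (1 / 2) 1) := by
      apply Hf_strictMonoOn 2 _ (convex_Ico _ _)
      · rintro x ⟨hx1, hx2⟩
        constructor <;> nlinarith
      · rw [interior_Ico]
        rintro x ⟨hx1, hx2⟩
        nlinarith
    rintro p (⟨hp1, hp2⟩ | ⟨hp1, hp2⟩)
    · -- p ∈ (0, 1/2)
      have hq : 0 < 1 - (((2 : ℕ) : ℝ) - 1) * p := by rw [hcast]; nlinarith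
      have hLpos : 0 < Real.log (1 - (((2 : ℕ) : ℝ) - 1) * p) - Real.log p := by
        rw [hcast]; exact L_pos 2 p hp1 (by nlinarith)
      have hH : Hf 2 p < 0 := by
        have := mono1 ⟨hp1, hp2.le⟩ ⟨by norm_num, le_refl _⟩ hp2
        rw [hval] at this; linarith
      rw [g0_eq_div 2 p hp1 hq hLpos.ne']
      rw [hcast]
      exact div_neg_of_neg_of_pos hH (by rw [hcast] at hLpos; exact hLpos)
    · -- p ∈ (1/2, 1)
      have hq : 0 < 1 - (((2 : ℕ) : ℝ) - 1) * p := by rw [hcast]; nlinarith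
      have hLneg : Real.log (1 - (((2 : ℕ) : ℝ) - 1) * p) - Real.log p < 0 := by
        rw [hcast]
        exact L_neg 2 p (by linarith) (by nlinarith) (by nlinarith)
      have hH : 0 < Hf 2 p := by
        have := mono2 ⟨le_refl _, by norm_num⟩ ⟨hp1.le, hp2⟩ hp1
        rw [hval] at this; linarith
      rw [g0_eq_div 2 p (by linarith) hq hLneg.ne]
      rw [hcast]
      exact div_neg_of_pos_of_neg hH (by rw [hcast] at hLneg; exact hLneg)
  · -- n ≥ 3 case
    intro n hn
    set N : ℝ := (n : ℝ) with hNdef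
    have hN3 : (3 : ℝ) ≤ N := by rw [hNdef]; exact_mod_cast hn
    have hN0 : 0 < N := by linarith
    have hN1 : 0 < N - 1 := by linarith
    set a : ℝ := 1 / (N * (N - 1)) with hadef
    set b : ℝ := 1 / N with hbdef
    set c : ℝ := 1 / (N - 1) with hcdef
    clear_value N a b c
    have ha_pos : 0 < a := by rw [hadef]; exact div_pos one_pos (mul_pos hN0 hN1)
    have hab : a < b := by
      rw [hadef, hbdef, div_lt_div_iff₀ (mul_pos hN0 hN1) hN0]
      nlinarith
    have hbc : b < c := by
      rw [hbdef, hcdef, div_lt_div_iff₀ hN0 hN1]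
      nlinarith
    -- exp N is big
    have hexpN : N + 1 ≤ Real.exp N := by
      have := Real.add_one_le_exp N; linarith
    have hexpN2 : N * N - N < Real.exp N := by
      have hs := Real.sum_le_exp_of_nonneg (by linarith : (0:ℝ) ≤ N) 4
      rw [Finset.sum_range_succ, Finset.sum_range_succ, Finset.sum_range_succ,
        Finset.sum_range_one] at hs
      norm_num [Nat.factorial] at hs
      nlinarith [hs]
    set E : ℝ := Real.exp (-N) with hEdef
    clear_value E
    have hE_pos : 0 < E := by rw [hEdef]; exact Real.exp_pos _
    have hE_exp : E * Real.exp N = 1 := by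
      rw [hEdef, ← Real.exp_add]; simp
    have hEa : E < a := by
      rw [hadef, lt_div_iff₀ (mul_pos hN0 hN1)]
      have h1 : E * (N * (N - 1)) < E * Real.exp N := by
        apply mul_lt_mul_of_pos_left _ hE_pos
        nlinarith
      rw [hE_exp] at h1; exact h1
    have hEb : E < b := lt_trans hEa hab
    -- monotonicity regions
    have g0N : ∀ p : ℝ, 0 < p → 0 < 1 - (N - 1) * p →
        Real.log (1 - (N - 1) * p) - Real.log p ≠ 0 →
        g0 n p = Hf N p / (Real.log (1 - (N - 1) * p) - Real.log p) := by
      intro p h1 h2 h3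
      rw [hNdef] at h2 h3 ⊢
      exact g0_eq_div n p h1 h2 h3
    have hsub1 : ∀ x ∈ Set.Ioc 0 a, 0 < x ∧ 0 < 1 - (N - 1) * x := by
      rintro x ⟨hx1, hx2⟩
      refine ⟨hx1, ?_⟩
      have : x < c := lt_of_le_of_lt hx2 (lt_trans hab hbc)
      rw [hcdef, lt_div_iff₀ hN1] at this
      linarith
    have hsub2 : ∀ x ∈ Set.Icc a b, 0 < x ∧ 0 < 1 - (N - 1) * x := by
      rintro x ⟨hx1, hx2⟩
      refine ⟨lt_of_lt_of_le ha_pos hx1, ?_⟩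
      have : x < c := lt_of_le_of_lt hx2 hbc
      rw [hcdef, lt_div_iff₀ hN1] at this
      linarith
    have hsub3 : ∀ x ∈ Set.Ico b c, 0 < x ∧ 0 < 1 - (N - 1) * x := by
      rintro x ⟨hx1, hx2⟩
      refine ⟨lt_of_lt_of_le (lt_trans ha_pos hab) hx1, ?_⟩
      rw [hcdef, lt_div_iff₀ hN1] at hx2
      linarith
    have mono1 : StrictMonoOn (Hf N) (Set.Ioc 0 a) := by
      apply Hf_strictMonoOn N _ (convex_Ioc _ _) hsub1
      rw [interior_Ioc]
      rintro x ⟨hx1, hx2⟩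
      have h1 : N * (N - 1) * x < 1 := by
        rw [hadef, lt_div_iff₀ (mul_pos hN0 hN1)] at hx2; linarith
      have h2 : N * x < 1 := by
        have := lt_trans hx2 hab
        rw [hbdef, lt_div_iff₀ hN0] at this; linarith
      exact mul_pos_of_neg_of_neg (by linarith) (by linarith)
    have anti : StrictAntiOn (Hf N) (Set.Icc a b) := by
      apply Hf_strictAntiOn N _ (convex_Icc _ _) hsub2
      rw [interior_Icc]
      rintro x ⟨hx1, hx2⟩
      have h1 : 1 < N * (N - 1) * x := by
        rw [hadef, div_lt_iff₀ (mul_pos hN0 hN1)] at hx1; linarith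
      have h2 : N * x < 1 := by
        rw [hbdef, lt_div_iff₀ hN0] at hx2; linarith
      exact mul_neg_of_pos_of_neg (by linarith) (by linarith)
    have mono2 : StrictMonoOn (Hf N) (Set.Ico b c) := by
      apply Hf_strictMonoOn N _ (convex_Ico _ _) hsub3
      rw [interior_Ico]
      rintro x ⟨hx1, hx2⟩
      have h2 : 1 < N * x := by
        rw [hbdef, div_lt_iff₀ hN0] at hx1; linarith
      have h1 : 1 < N * (N - 1) * x := by nlinarith [h2, hN3]
      exact mul_pos (by linarith) (by linarith)
    have hHb : Hf N b = 0 := by rw [hbdef]; exact Hf_at_inv N hN0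
    have hHa : 0 < Hf N a := by
      have := anti ⟨le_refl _, hab.le⟩ ⟨hab.le, le_refl _⟩ hab
      rw [hHb] at this; linarith
    have hHE : Hf N E < 0 := by
      -- Hf N E = -N^2 E - log(1 - (N-1)E)
      have hx : (N - 1) * E < 1 := by
        have h1 : (N - 1) * E < Real.exp N * E :=
          mul_lt_mul_of_pos_right (by linarith) hE_pos
        have h2 : Real.exp N * E = 1 := by rw [mul_comm]; exact hE_exp
        linarith
      have h1x : 0 < 1 - (N - 1) * E := by linarith
      have hlogE : Real.log E = -N := by rw [hEdef, Real.log_exp]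
      have hlog : -Real.log (1 - (N - 1) * E) < (N - 1) * E / (1 - (N - 1) * E) := by
        have hy : (0 : ℝ) < (1 - (N - 1) * E)⁻¹ := by positivity
        have hlt1 : 1 - (N - 1) * E < 1 := by nlinarith [mul_pos hN1 hE_pos]
        have hinv : 1 < (1 - (N - 1) * E)⁻¹ := (one_lt_inv₀ h1x).mpr hlt1
        have hle := Real.log_lt_sub_one_of_pos hy hinv.ne'
        rw [Real.log_inv] at hle
        have heq : (1 - (N - 1) * E)⁻¹ - 1 = (N - 1) * E / (1 - (N - 1) * E) := by
          field_simp
          ring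
        rw [heq] at hle
        exact hle
      have hfrac : (N - 1) * E / (1 - (N - 1) * E) ≤ N ^ 2 * E := by
        rw [div_le_iff₀ h1x]
        -- (N-1)E ≤ N²E(1 - (N-1)E);  divide by E: N-1 ≤ N² - N²(N-1)E
        -- N²(N-1)E ≤ N(N-1) since E ≤ 1/N (exp N ≥ N)
        have hEN : E * N ≤ 1 := by
          have h1 : E * N ≤ E * Real.exp N := by
            apply mul_le_mul_of_nonneg_left _ hE_pos.le
            linarith
          rw [hE_exp] at h1; exact h1
        have k1 : N ^ 2 * (N - 1) * E ≤ N * (N - 1) := by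
          have h := mul_le_mul_of_nonneg_left hEN (le_of_lt (mul_pos hN0 hN1))
          calc N ^ 2 * (N - 1) * E = N * (N - 1) * (E * N) := by ring
            _ ≤ N * (N - 1) * 1 := h
            _ = N * (N - 1) := by ring
        have k2 : (0 : ℝ) < N ^ 2 - (N - 1) - N ^ 2 * (N - 1) * E := by nlinarith [k1]
        nlinarith [mul_pos hE_pos k2]
      rw [Hf, hlogE]
      linarith [hlog, hfrac]
    -- IVT to get κ
    have hcont : ContinuousOn (Hf N) (Set.Icc E a) := by
      intro x hx
      obtain ⟨hx1, hx2⟩ := hx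
      have h1 : 0 < x := lt_of_lt_of_le hE_pos hx1
      have h2 : 0 < 1 - (N - 1) * x := (hsub1 x ⟨h1, hx2⟩).2
      exact (hasDerivAt_Hf N x h1 h2).continuousAt.continuousWithinAt
    obtain ⟨κ, hκmem, hκ0⟩ := intermediate_value_Ioo hEa.le hcont ⟨hHE, hHa⟩
    obtain ⟨hκE, hκa⟩ := hκmem
    have hκ_pos : 0 < κ := lt_trans hE_pos hκE
    have hκb : κ < b := lt_trans hκa hab
    refine ⟨κ, ⟨hκE, hκa⟩, ?_, ?_, ?_⟩
    · -- 0 < g0 n p on (κ, 1/N)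
      rintro p ⟨hp1, hp2⟩
      have hpb : p < b := hp2
      have hp_pos : 0 < p := lt_trans hκ_pos hp1
      have hq : 0 < 1 - (N - 1) * p := by
        rcases le_or_gt p a with h | h
        · exact (hsub1 p ⟨hp_pos, h⟩).2
        · exact (hsub2 p ⟨h.le, hpb.le⟩).2
      have hH : 0 < Hf N p := by
        rcases le_or_gt p a with h | h
        · have := mono1 ⟨hκ_pos, hκa.le⟩ ⟨hp_pos, h⟩ hp1
          rw [hκ0] at this; exact this
        · have := anti ⟨h.le, hpb.le⟩ ⟨hab.le, le_refl _⟩ hpb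
          rw [hHb] at this; linarith
      have hNp : N * p < 1 := by
        rw [hbdef, lt_div_iff₀ hN0] at hpb; linarith
      have hL := L_pos N p hp_pos hNp
      rw [g0N p hp_pos hq hL.ne']
      exact div_pos hH hL
    · -- g0 n κ = 0
      have hq : 0 < 1 - (N - 1) * κ := (hsub1 κ ⟨hκ_pos, hκa.le⟩).2
      have hNκ : N * κ < 1 := by
        rw [hbdef, lt_div_iff₀ hN0] at hκb; linarith
      have hL := L_pos N κ hκ_pos hNκ
      rw [g0N κ hκ_pos hq hL.ne', hκ0]
      simp
    · -- g0 n p < 0 on (0,κ) ∪ (1/N, 1/(N-1))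
      rintro p (⟨hp1, hp2⟩ | ⟨hp1, hp2⟩)
      · have hq : 0 < 1 - (N - 1) * p := (hsub1 p ⟨hp1, (lt_trans hp2 hκa).le⟩).2
        have hH : Hf N p < 0 := by
          have := mono1 ⟨hp1, (lt_trans hp2 hκa).le⟩ ⟨hκ_pos, hκa.le⟩ hp2
          rw [hκ0] at this; exact this
        have hNp : N * p < 1 := by
          have : p < b := lt_trans hp2 hκb
          rw [hbdef, lt_div_iff₀ hN0] at this; linarith
        have hL := L_pos N p hp1 hNp
        rw [g0N p hp1 hq hL.ne']
        exact div_neg_of_neg_of_pos hH hL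
      · have hp_pos : 0 < p := lt_trans (lt_trans ha_pos hab) hp1
        have hq : 0 < 1 - (N - 1) * p := (hsub3 p ⟨hp1.le, hp2⟩).2
        have hH : 0 < Hf N p := by
          have := mono2 ⟨le_refl _, hbc⟩ ⟨hp1.le, hp2⟩ hp1
          rw [hHb] at this; exact this
        have hNp : 1 < N * p := by
          rw [hbdef, div_lt_iff₀ hN0] at hp1; linarith
        have hL := L_neg N p hp_pos hq hNp
        rw [g0N p hp_pos hq hL.ne]
        exact div_neg_of_pos_of_neg hH hL
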